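/- Consider the MDP with states {s, t₁, t₂}, where state s has two enabled actions α and β with P(s,α,t₁)=1 and P(s,β,t₂)=1, state t₁ has a single enabled action γ with P(t₁,γ,s)=1, and t₂ is absorbing. Then there exists a (memoryful) scheduler σ with Pr^σ_s(◇{t₁}) = Pr^σ_s(◇{t₂}), but every memoryless (possibly randomized) scheduler σ satisfies Pr^σ_s(◇{t₁}) ≠ Pr^σ_s(◇{t₂}). Hence memory is necessary for relational reachability with exact equality. -/

import Mathlib

open scoped BigOperators Classical
open Filter

/-- A finite history: an initial state together with a list of (action, next-state) steps. -/
abbrev Hist (S A : Type*) : Type _ := S × List (A × S)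

/-- The last state of a history. -/
def Hist.last {S A : Type*} (π : Hist S A) : S :=
  (π.2.getLast?).elim π.1 Prod.snd

/-- A Markov decision process with finite state space `S` and finite action space `A`:
`P s a s'` is the transition probability, each state has at least one enabled action
(an action whose outgoing probabilities sum to `1`), and the outgoing probabilities
of a non-enabled action sum to `0`. -/
structure MDP (S A : Type*) [Fintype S] [Fintype A] where
  P : S → A → S → ℝ
  nonneg : ∀ s a s', 0 ≤ P s a s'
  le_one : ∀ s a s', P s a s' ≤ 1
  sum_cases : ∀ s a, (∑ s', P s a s') = 1 ∨ (∑ s', P s a s') = 0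
  exists_enabled : ∀ s, ∃ a, (∑ s', P s a s') = 1

namespace MDP

variable {S A : Type*} [Fintype S] [Fintype A]

/-- Action `a` is enabled in state `s`. -/
def enabled (M : MDP S A) (s : S) (a : A) : Prop := (∑ s', M.P s a s') = 1

/-- A state is absorbing if every enabled action loops on it with probability 1. -/
def Absorbing (M : MDP S A) (s : S) : Prop := ∀ a, M.enabled s a → M.P s a s = 1

end MDP

/-- A (history-dependent, randomized) scheduler for `M`: it assigns to every finite
history a probability distribution over the actions enabled at its last state. -/
structure Scheduler {S A : Type*} [Fintype S] [Fintype A] (M : MDP S A) where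
  choice : Hist S A → A → ℝ
  nonneg : ∀ π a, 0 ≤ choice π a
  sum_one : ∀ π, (∑ a, choice π a) = 1
  supp : ∀ π a, ¬ M.enabled (Hist.last π) a → choice π a = 0

namespace Scheduler

variable {S A : Type*} [Fintype S] [Fintype A] {M : MDP S A}

/-- A scheduler is memoryless if its choice only depends on the last state of the history. -/
def Memoryless (σ : Scheduler M) : Prop :=
  ∀ π π' : Hist S A, Hist.last π = Hist.last π' → σ.choice π = σ.choice π'

/-- A scheduler is deterministic if all its choice probabilities are 0 or 1. -/
def Deterministic (σ : Scheduler M) : Prop :=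
  ∀ π a, σ.choice π a = 0 ∨ σ.choice π a = 1

/-- Memoryless deterministic (MD) schedulers. -/
def MD (σ : Scheduler M) : Prop := σ.Memoryless ∧ σ.Deterministic

end Scheduler

/-- Probability of reaching the target set `T` within `n` steps, starting from history `π`,
under scheduler `σ`. -/
noncomputable def reachN {S A : Type*} [Fintype S] [Fintype A] (M : MDP S A)
    (σ : Scheduler M) (T : Set S) : ℕ → Hist S A → ℝ
  | 0, π => if Hist.last π ∈ T then 1 else 0
  | n + 1, π =>
      if Hist.last π ∈ T then 1
      else ∑ a, σ.choice π a * ∑ s', M.P (Hist.last π) a s' *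
        reachN M σ T n (π.1, π.2 ++ [(a, s')])

/-- `Pr M σ s T` is the probability of eventually reaching `T` from state `s` under
scheduler `σ`: the supremum of the step-bounded reachability probabilities. -/
noncomputable def Pr {S A : Type*} [Fintype S] [Fintype A] (M : MDP S A)
    (σ : Scheduler M) (s : S) (T : Set S) : ℝ :=
  ⨆ n : ℕ, reachN M σ T n (s, [])

set_option linter.unusedSectionVars false
section Helpers
variable {S A : Type*} [Fintype S] [Fintype A] {M : MDP S A} (σ : Scheduler M)

lemma hist_last_mk (s : S) : Hist.last ((s, []) : Hist S A) = s := rfl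

lemma hist_last_concat (π : Hist S A) (a : A) (s' : S) :
    Hist.last ((π.1, π.2 ++ [(a, s')]) : Hist S A) = s' := by
  simp [Hist.last]

lemma reachN_nonneg (T : Set S) : ∀ n (π : Hist S A), 0 ≤ reachN M σ T n π := by
  intro n
  induction n with
  | zero => intro π; simp only [reachN]; split <;> norm_num
  | succ n ih =>
    intro π
    simp only [reachN]
    split
    · norm_num
    · refine Finset.sum_nonneg fun a _ => mul_nonneg (σ.nonneg _ _) ?_
      exact Finset.sum_nonneg fun s' _ => mul_nonneg (M.nonneg _ _ _) (ih _)

lemma reachN_le_one (T : Set S) : ∀ n (π : Hist S A), reachN M σ T n π ≤ 1 := by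
  intro n
  induction n with
  | zero => intro π; simp only [reachN]; split <;> norm_num
  | succ n ih =>
    intro π
    simp only [reachN]
    split
    · norm_num
    · calc (∑ a, σ.choice π a * ∑ s', M.P (Hist.last π) a s' *
            reachN M σ T n (π.1, π.2 ++ [(a, s')]))
          ≤ ∑ a, σ.choice π a * 1 := by
            refine Finset.sum_le_sum fun a _ => mul_le_mul_of_nonneg_left ?_ (σ.nonneg _ _)
            calc (∑ s', M.P (Hist.last π) a s' * reachN M σ T n (π.1, π.2 ++ [(a, s')]))
                ≤ ∑ s', M.P (Hist.last π) a s' * 1 :=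
                  Finset.sum_le_sum fun s' _ =>
                    mul_le_mul_of_nonneg_left (ih _) (M.nonneg _ _ _)
              _ ≤ 1 := by
                  simp only [mul_one]
                  rcases M.sum_cases (Hist.last π) a with h | h <;> rw [h] <;> norm_num
      _ = 1 := by simp [σ.sum_one]

lemma bddAbove_reachN (T : Set S) (s : S) :
    BddAbove (Set.range fun n => reachN M σ T n ((s, []) : Hist S A)) := by
  refine ⟨1, ?_⟩
  rintro x ⟨n, rfl⟩
  exact reachN_le_one σ T n _

lemma pr_eq_of_const (T : Set S) (s : S) (c : ℝ) (hc : 0 ≤ c)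
    (h0 : reachN M σ T 0 ((s, []) : Hist S A) = 0)
    (h : ∀ n, reachN M σ T (n + 1) ((s, []) : Hist S A) = c) :
    Pr M σ s T = c := by
  unfold Pr
  apply le_antisymm
  · refine ciSup_le fun n => ?_
    cases n with
    | zero => rw [h0]; exact hc
    | succ n => rw [h n]
  · have := le_ciSup (bddAbove_reachN σ T s) 1
    rw [h 0] at this
    exact this

lemma reachN_memoryless (h : σ.Memoryless) (T : Set S) :
    ∀ n (π : Hist S A), reachN M σ T n π = reachN M σ T n (Hist.last π, []) := by
  intro n
  induction n with
  | zero => intro π; simp only [reachN, hist_last_mk]; rfl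
  | succ n ih =>
    intro π
    simp only [reachN]
    by_cases hT : Hist.last π ∈ T
    · rw [if_pos hT, if_pos (show Hist.last ((Hist.last π, []) : Hist S A) ∈ T from hT)]
    · rw [if_neg hT, if_neg (show Hist.last ((Hist.last π, []) : Hist S A) ∉ T from hT)]
      simp only [hist_last_mk]
      refine Finset.sum_congr rfl fun a _ => ?_
      rw [h π (Hist.last π, []) rfl]
      refine congrArg _ (Finset.sum_congr rfl fun s' _ => congrArg _ ?_)
      have h1 := ih (π.1, π.2 ++ [(a, s')])
      have h2 := ih (((Hist.last π, []) : Hist S A).1, ((Hist.last π, []) : Hist S A).2 ++ [(a, s')])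
      rw [h1, h2]
      simp [Hist.last]

end Helpers
/-- The concrete transition function: state `0` (= s) has enabled actions `0` (= α, to `t₁`)
and `1` (= β, to `t₂`); state `1` (= t₁) has the single enabled action `2` (= γ, back to `s`);
state `2` (= t₂) is absorbing. -/
noncomputable def P8 : Fin 3 → Fin 3 → Fin 3 → ℝ := fun st a st' =>
  if st = 0 then
    (if a = 0 then (if st' = 1 then 1 else 0)
     else if a = 1 then (if st' = 2 then 1 else 0) else 0)
  else if st = 1 then
    (if a = 2 then (if st' = 0 then 1 else 0) else 0)
  else (if st' = 2 then 1 else 0)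

section P8Helpers
variable {M : MDP (Fin 3) (Fin 3)} (hM : M.P = P8) (σ : Scheduler M)
include hM

omit hM in
lemma reachN_mem {T : Set (Fin 3)} {π : Hist (Fin 3) (Fin 3)} (hπ : Hist.last π ∈ T) :
    ∀ n, reachN M σ T n π = 1 := by
  intro n; cases n <;> simp [reachN, hπ]

lemma not_enabled_02 : ¬ M.enabled 0 2 := by
  unfold MDP.enabled; rw [hM]; simp [P8, Fin.sum_univ_three]

lemma not_enabled_10 : ¬ M.enabled 1 0 := by
  unfold MDP.enabled; rw [hM]; simp [P8, Fin.sum_univ_three]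

lemma not_enabled_11 : ¬ M.enabled 1 1 := by
  unfold MDP.enabled; rw [hM]; simp [P8, Fin.sum_univ_three]

lemma choice1 {π : Hist (Fin 3) (Fin 3)} (hπ : Hist.last π = 1) :
    σ.choice π 2 = 1 := by
  have h0 : σ.choice π 0 = 0 := σ.supp π 0 (by rw [hπ]; exact not_enabled_10 hM)
  have h1 : σ.choice π 1 = 0 := σ.supp π 1 (by rw [hπ]; exact not_enabled_11 hM)
  have := σ.sum_one π
  rw [Fin.sum_univ_three, h0, h1] at this
  linarith

lemma step0 {T : Set (Fin 3)} (hT : (0 : Fin 3) ∉ T) {π : Hist (Fin 3) (Fin 3)}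
    (hπ : Hist.last π = 0) (n : ℕ) :
    reachN M σ T (n + 1) π =
      σ.choice π 0 * reachN M σ T n (π.1, π.2 ++ [(0, 1)]) +
      σ.choice π 1 * reachN M σ T n (π.1, π.2 ++ [(1, 2)]) := by
  have h2 : σ.choice π 2 = 0 := σ.supp π 2 (by rw [hπ]; exact not_enabled_02 hM)
  simp only [reachN, hπ, if_neg hT, hM, Fin.sum_univ_three, P8, h2]
  norm_num [show (2:Fin 3) ≠ 1 from by decide, show (0:Fin 3) ≠ 2 from by decide, show (1:Fin 3) ≠ 2 from by decide, show (2:Fin 3) ≠ 0 from by decide]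

lemma step1 {T : Set (Fin 3)} (hT : (1 : Fin 3) ∉ T) {π : Hist (Fin 3) (Fin 3)}
    (hπ : Hist.last π = 1) (n : ℕ) :
    reachN M σ T (n + 1) π = reachN M σ T n (π.1, π.2 ++ [(2, 0)]) := by
  have h0 : σ.choice π 0 = 0 := σ.supp π 0 (by rw [hπ]; exact not_enabled_10 hM)
  have h1 : σ.choice π 1 = 0 := σ.supp π 1 (by rw [hπ]; exact not_enabled_11 hM)
  have h2 := choice1 hM σ hπ
  simp only [reachN, hπ, if_neg hT, hM, Fin.sum_univ_three, P8, h0, h1, h2]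
  norm_num [show (2:Fin 3) ≠ 1 from by decide, show (0:Fin 3) ≠ 2 from by decide, show (1:Fin 3) ≠ 2 from by decide, show (2:Fin 3) ≠ 0 from by decide]

lemma step2 {T : Set (Fin 3)} (hT : (2 : Fin 3) ∉ T) {π : Hist (Fin 3) (Fin 3)}
    (hπ : Hist.last π = 2) (n : ℕ) :
    reachN M σ T (n + 1) π = ∑ a, σ.choice π a * reachN M σ T n (π.1, π.2 ++ [(a, 2)]) := by
  simp only [reachN, hπ, if_neg hT, hM, P8]
  refine Finset.sum_congr rfl fun a _ => congrArg _ ?_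
  simp [Fin.sum_univ_three]

/-- From a history ending at state 2, the target {1} is never reached. -/
lemma reach1_from2 {π : Hist (Fin 3) (Fin 3)} (hπ : Hist.last π = 2) :
    ∀ n, reachN M σ ({1} : Set (Fin 3)) n π = 0 := by
  have hT : (2 : Fin 3) ∉ ({1} : Set (Fin 3)) := by simp
  intro n
  induction n generalizing π with
  | zero => simp [reachN, hπ]
  | succ n ih =>
      rw [step2 hM σ hT hπ]
      have : ∀ a : Fin 3, σ.choice π a * reachN M σ ({1} : Set (Fin 3)) n (π.1, π.2 ++ [(a, 2)]) = 0 := by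
        intro a; rw [ih (hist_last_concat π a 2)]; ring
      simp [this]

end P8Helpers
lemma fin3_eq_two {x : Fin 3} (h0 : x ≠ 0) (h1 : x ≠ 1) : x = 2 := by
  revert h0 h1; revert x; decide

section Part1
variable {M : MDP (Fin 3) (Fin 3)} (hM : M.P = P8)
include hM

lemma enabled_00 : M.enabled 0 0 := by
  unfold MDP.enabled; rw [hM]; simp [P8, Fin.sum_univ_three]

lemma enabled_01 : M.enabled 0 1 := by
  unfold MDP.enabled; rw [hM]
  simp [P8, Fin.sum_univ_three, show (0:Fin 3) ≠ 2 from by decide,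
    show (1:Fin 3) ≠ 2 from by decide, show (1:Fin 3) ≠ 0 from by decide]

lemma enabled_12 : M.enabled 1 2 := by
  unfold MDP.enabled; rw [hM]
  simp [P8, Fin.sum_univ_three, show (1:Fin 3) ≠ 0 from by decide,
    show (2:Fin 3) ≠ 1 from by decide]

lemma enabled_2 (a : Fin 3) : M.enabled 2 a := by
  unfold MDP.enabled; rw [hM]
  simp [P8, Fin.sum_univ_three, show (2:Fin 3) ≠ 0 from by decide,
    show (2:Fin 3) ≠ 1 from by decide]

/-- The memoryful scheduler: at the initial history (at state 0) randomize 1/2–1/2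
between actions 0 and 1; at any later visit to state 0 always choose action 0;
at state 1 choose action 2; at state 2 choose action 0. -/
noncomputable def sigma0 (M : MDP (Fin 3) (Fin 3)) (hM : M.P = P8) : Scheduler M where
  choice := fun π a =>
    if Hist.last π = 1 then (if a = 2 then 1 else 0)
    else if Hist.last π = 0 then
      (if π.2 = [] then (if a = 0 then 1/2 else if a = 1 then 1/2 else 0)
       else (if a = 0 then 1 else 0))
    else (if a = 0 then 1 else 0)
  nonneg := by intro π a; split_ifs <;> norm_num
  sum_one := by
    intro π; rw [Fin.sum_univ_three]
    by_cases l1 : Hist.last π = 1 <;> by_cases l0 : Hist.last π = 0 <;>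
      by_cases he : π.2 = [] <;>
      simp [l1, l0, he, show (0:Fin 3) ≠ 2 from by decide, show (1:Fin 3) ≠ 2 from by decide,
        show (1:Fin 3) ≠ 0 from by decide, show (2:Fin 3) ≠ 0 from by decide,
        show (2:Fin 3) ≠ 1 from by decide] <;> norm_num
  supp := by
    intro π a h
    split_ifs with l1 ha l0 he ha0 ha1 ha0' ha0'' <;> try rfl
    · rw [l1, ha] at h; exact (h (enabled_12 hM)).elim
    · rw [l0, ha0] at h; exact (h (enabled_00 hM)).elim
    · rw [l0, ha1] at h; exact (h (enabled_01 hM)).elim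
    · rw [l0, ha0'] at h; exact (h (enabled_00 hM)).elim
    · rw [fin3_eq_two l0 l1] at h; exact (h (enabled_2 hM a)).elim

lemma sigma0_init0 : (sigma0 M hM).choice ((0 : Fin 3), []) 0 = 1/2 := by
  simp [sigma0, Hist.last, show (0:Fin 3) ≠ 1 from by decide]

lemma sigma0_init1 : (sigma0 M hM).choice ((0 : Fin 3), []) 1 = 1/2 := by
  simp [sigma0, Hist.last, show (0:Fin 3) ≠ 1 from by decide,
    show (1:Fin 3) ≠ 0 from by decide]

lemma sigma0_later0 {π : Hist (Fin 3) (Fin 3)} (hπ : Hist.last π = 0) (hne : π.2 ≠ []) :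
    (sigma0 M hM).choice π 0 = 1 := by
  simp [sigma0, hπ, hne, show (0:Fin 3) ≠ 1 from by decide]

lemma sigma0_later1 {π : Hist (Fin 3) (Fin 3)} (hπ : Hist.last π = 0) (hne : π.2 ≠ []) :
    (sigma0 M hM).choice π 1 = 0 := by
  simp [sigma0, hπ, hne, show (0:Fin 3) ≠ 1 from by decide,
    show (1:Fin 3) ≠ 0 from by decide]

lemma sigma0_zero12 : ∀ n (π : Hist (Fin 3) (Fin 3)),
    (Hist.last π = 1 ∨ (Hist.last π = 0 ∧ π.2 ≠ [])) →
    reachN M (sigma0 M hM) ({2} : Set (Fin 3)) n π = 0 := by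
  intro n
  induction n with
  | zero =>
    rintro π (hπ | ⟨hπ, -⟩) <;>
      simp [reachN, hπ, show (1:Fin 3) ≠ 2 from by decide, show (0:Fin 3) ≠ 2 from by decide]
  | succ n ih =>
    rintro π (hπ | ⟨hπ, hne⟩)
    · rw [step1 hM _ (by simp [show (1:Fin 3) ≠ 2 from by decide]) hπ]
      exact ih _ (Or.inr ⟨hist_last_concat π 2 0, by simp⟩)
    · rw [step0 hM _ (by simp [show (0:Fin 3) ≠ 2 from by decide]) hπ,
        sigma0_later0 hM hπ hne, sigma0_later1 hM hπ hne,
        ih _ (Or.inl (hist_last_concat π 0 1))]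
      ring

lemma part1 : Pr M (sigma0 M hM) 0 ({1} : Set (Fin 3)) = 1/2 ∧
    Pr M (sigma0 M hM) 0 ({2} : Set (Fin 3)) = 1/2 := by
  have h01 : ((0:Fin 3), ([] : List (Fin 3 × Fin 3))).2 = [] := rfl
  constructor
  · refine pr_eq_of_const _ _ _ _ (by norm_num) ?_ ?_
    · simp [reachN, Hist.last, show (0:Fin 3) ≠ 1 from by decide]
    · intro n
      rw [step0 hM _ (by simp [show (0:Fin 3) ≠ 1 from by decide])
        (show Hist.last ((0:Fin 3), ([] : List (Fin 3 × Fin 3))) = 0 from rfl) n]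
      simp only [List.nil_append]
      rw [sigma0_init0, sigma0_init1,
        reachN_mem _ (by simp [Hist.last] : Hist.last ((0:Fin 3), [((0:Fin 3),(1:Fin 3))]) ∈ ({1} : Set (Fin 3))) n,
        reach1_from2 hM _ (by simp [Hist.last]) n]
      ring
  · refine pr_eq_of_const _ _ _ _ (by norm_num) ?_ ?_
    · simp [reachN, Hist.last, show (0:Fin 3) ≠ 2 from by decide]
    · intro n
      rw [step0 hM _ (by simp [show (0:Fin 3) ≠ 2 from by decide])
        (show Hist.last ((0:Fin 3), ([] : List (Fin 3 × Fin 3))) = 0 from rfl) n]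
      simp only [List.nil_append]
      rw [sigma0_init0, sigma0_init1,
        reachN_mem _ (by simp [Hist.last] : Hist.last ((0:Fin 3), [((1:Fin 3),(2:Fin 3))]) ∈ ({2} : Set (Fin 3))) n,
        sigma0_zero12 hM n _ (Or.inl (by simp [Hist.last]))]
      ring

end Part1
section Part2
variable {M : MDP (Fin 3) (Fin 3)} (hM : M.P = P8)
include hM

lemma part2 (σ : Scheduler M) (hmem : σ.Memoryless) :
    Pr M σ 0 ({1} : Set (Fin 3)) ≠ Pr M σ 0 ({2} : Set (Fin 3)) := by
  set p : ℝ := σ.choice ((0 : Fin 3), []) 0 with hpdef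
  set q : ℝ := σ.choice ((0 : Fin 3), []) 1 with hqdef
  have hc2 : σ.choice ((0 : Fin 3), ([] : List (Fin 3 × Fin 3))) 2 = 0 :=
    σ.supp _ 2 (not_enabled_02 hM)
  have hpq : p + q = 1 := by
    have := σ.sum_one ((0 : Fin 3), [])
    rw [Fin.sum_univ_three, hc2] at this; linarith
  have hp0 : (0:ℝ) ≤ p := σ.nonneg _ _
  have hq0 : (0:ℝ) ≤ q := σ.nonneg _ _
  have hlast0 : Hist.last ((0 : Fin 3), ([] : List (Fin 3 × Fin 3))) = 0 := rfl
  have hlast1 : Hist.last ((1 : Fin 3), ([] : List (Fin 3 × Fin 3))) = 1 := rfl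
  -- Pr to {1} equals p
  have h1 : Pr M σ 0 ({1} : Set (Fin 3)) = p := by
    refine pr_eq_of_const _ _ _ _ hp0 ?_ ?_
    · simp [reachN, Hist.last, show (0:Fin 3) ≠ 1 from by decide]
    · intro n
      rw [step0 hM σ (by simp [show (0:Fin 3) ≠ 1 from by decide]) hlast0 n]
      simp only [List.nil_append]
      rw [reachN_mem _ (by simp [Hist.last] :
            Hist.last ((0:Fin 3), [((0:Fin 3),(1:Fin 3))]) ∈ ({1} : Set (Fin 3))) n,
        reach1_from2 hM _ (by simp [Hist.last]) n]
      ring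
  -- recurrences for reaching {2}
  have key_g : ∀ n, reachN M σ ({2} : Set (Fin 3)) (n+1) ((1:Fin 3), []) =
      reachN M σ ({2} : Set (Fin 3)) n ((0:Fin 3), []) := by
    intro n
    rw [step1 hM σ (by simp [show (1:Fin 3) ≠ 2 from by decide]) hlast1 n]
    simp only [List.nil_append]
    rw [reachN_memoryless σ hmem _ n ((1:Fin 3), [((2:Fin 3),(0:Fin 3))])]
    simp only [show Hist.last ((1:Fin 3), [((2:Fin 3),(0:Fin 3))]) = 0 from by simp [Hist.last]]
  have key_f : ∀ n, reachN M σ ({2} : Set (Fin 3)) (n+1) ((0:Fin 3), []) =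
      p * reachN M σ ({2} : Set (Fin 3)) n ((1:Fin 3), []) + q := by
    intro n
    rw [step0 hM σ (by simp [show (0:Fin 3) ≠ 2 from by decide]) hlast0 n]
    simp only [List.nil_append]
    rw [reachN_mem _ (by simp [Hist.last] :
          Hist.last ((0:Fin 3), [((1:Fin 3),(2:Fin 3))]) ∈ ({2} : Set (Fin 3))) n,
      reachN_memoryless σ hmem _ n ((0:Fin 3), [((0:Fin 3),(1:Fin 3))])]
    simp only [show Hist.last ((0:Fin 3), [((0:Fin 3),(1:Fin 3))]) = 1 from rfl]
    ring
  have f0 : reachN M σ ({2} : Set (Fin 3)) 0 ((0:Fin 3), []) = 0 := by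
    simp [reachN, Hist.last, show (0:Fin 3) ≠ 2 from by decide]
  have g0 : reachN M σ ({2} : Set (Fin 3)) 0 ((1:Fin 3), []) = 0 := by
    simp [reachN, Hist.last, show (1:Fin 3) ≠ 2 from by decide]
  rcases eq_or_lt_of_le hq0 with hq | hq
  · -- q = 0, so p = 1, Pr to {2} is 0 while Pr to {1} is 1
    have hzero : ∀ n, reachN M σ ({2} : Set (Fin 3)) n ((0:Fin 3), []) = 0 ∧
        reachN M σ ({2} : Set (Fin 3)) n ((1:Fin 3), []) = 0 := by
      intro n
      induction n with
      | zero => exact ⟨f0, g0⟩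
      | succ n ih =>
        refine ⟨?_, ?_⟩
        · rw [key_f, ih.2, ← hq]; ring
        · rw [key_g]; exact ih.1
    have h2 : Pr M σ 0 ({2} : Set (Fin 3)) = 0 := by
      unfold Pr
      have : (fun n => reachN M σ ({2} : Set (Fin 3)) n ((0:Fin 3), [])) = fun _ => (0:ℝ) :=
        funext fun n => (hzero n).1
      rw [this, ciSup_const]
    have hp1 : p = 1 := by linarith
    rw [h1, h2, hp1]; norm_num
  · -- q > 0, so p < 1, but Pr to {2} is at least 1
    have hplt : p < 1 := by linarith
    have hF : ∀ k, reachN M σ ({2} : Set (Fin 3)) (2*k+1) ((0:Fin 3), []) = 1 - p^(k+1) := by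
      intro k
      induction k with
      | zero => rw [key_f 0, g0]; simp; linarith
      | succ k ih =>
        have he : 2*(k+1)+1 = (2*k+1) + 1 + 1 := by ring
        rw [he, key_f, key_g, ih]
        calc p * (1 - p^(k+1)) + q = (p + q) - p^(k+1+1) := by ring
          _ = 1 - p^(k+1+1) := by rw [hpq]
    have hge : (1:ℝ) ≤ Pr M σ 0 ({2} : Set (Fin 3)) := by
      have hb := bddAbove_reachN σ ({2} : Set (Fin 3)) (0 : Fin 3)
      have hle : ∀ k, 1 - p^(k+1) ≤ Pr M σ 0 ({2} : Set (Fin 3)) := by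
        intro k
        rw [← hF k]
        exact le_ciSup hb (2*k+1)
      have ht : Filter.Tendsto (fun k : ℕ => 1 - p^(k+1)) atTop (nhds 1) := by
        have h0 := tendsto_pow_atTop_nhds_zero_of_lt_one hp0 hplt
        have h2 := h0.comp (tendsto_add_atTop_nat 1)
        have : Filter.Tendsto (fun _ : ℕ => (1:ℝ)) atTop (nhds 1) := tendsto_const_nhds
        simpa [Function.comp] using this.sub h2
      exact le_of_tendsto ht (Filter.Eventually.of_forall hle)
    rw [h1]
    exact ne_of_lt (lt_of_lt_of_le hplt hge)

end Part2
/-- In the MDP with states `{s, t₁, t₂}` where `P(s,α,t₁) = 1`,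
`P(s,β,t₂) = 1`, `P(t₁,γ,s) = 1` and `t₂` absorbing: some (memoryful) scheduler reaches
`t₁` and `t₂` with equal probability, but every memoryless (possibly randomized)
scheduler reaches them with different probabilities.  Hence memory is necessary. -/
theorem memory_necessary
    (M : MDP (Fin 3) (Fin 3)) (hM : M.P = P8) :
    (∃ σ : Scheduler M,
        Pr M σ 0 ({1} : Set (Fin 3)) = Pr M σ 0 ({2} : Set (Fin 3))) ∧
    (∀ σ : Scheduler M, σ.Memoryless →
        Pr M σ 0 ({1} : Set (Fin 3)) ≠ Pr M σ 0 ({2} : Set (Fin 3))) := by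
  exact ⟨⟨sigma0 M hM, by rw [(part1 hM).1, (part1 hM).2]⟩, fun σ hmem => part2 hM σ hmem⟩
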